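/- The Gaussian copula has zero standardized rank coskewness: for any centered trivariate Gaussian vector with unit variances, H_i = Σ_k a_{ik}Z_k (i = 1,2,3) with Σ_k a_{ik}² = 1, one has E[(Φ(H₁)−1/2)·(Φ(H₂)−1/2)·(Φ(H₃)−1/2)] = 0, regardless of the pairwise correlations ρ_{ij} = Σ_k a_{ik}a_{jk}. -/

import Mathlib

open MeasureTheory ProbabilityTheory Real

/-- The cumulative distribution function `Φ` of the standard normal distribution. -/
noncomputable def stdNormalCDF (x : ℝ) : ℝ := ((gaussianReal 0 1) (Set.Iic x)).toReal

lemma gauss_map_neg : (gaussianReal 0 1).map (fun x : ℝ => -x) = gaussianReal 0 1 := by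
  have h := gaussianReal_map_const_mul (μ := 0) (v := 1) (-1)
  simp only [neg_one_mul, mul_zero] at h
  rw [h]
  norm_num

lemma stdNormalCDF_measurable : Measurable stdNormalCDF := by
  have : Monotone stdNormalCDF := fun x y hxy => by
    unfold stdNormalCDF
    exact ENNReal.toReal_mono (measure_ne_top _ _) (measure_mono (Set.Iic_subset_Iic.2 hxy))
  exact this.measurable

lemma gauss_singleton (x : ℝ) : (gaussianReal 0 1) {x} = 0 := by
  rw [gaussianReal_apply 0 one_ne_zero]
  exact setLIntegral_measure_zero _ _ (measure_singleton x)

lemma stdNormalCDF_neg (x : ℝ) : stdNormalCDF (-x) = 1 - stdNormalCDF x := by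
  have h1 : (gaussianReal 0 1) (Set.Iic (-x)) = (gaussianReal 0 1) (Set.Ici x) := by
    conv_rhs => rw [← gauss_map_neg]
    rw [Measure.map_apply measurable_neg measurableSet_Ici]
    congr 1
    ext y; simp [le_neg]
  have h2 : (gaussianReal 0 1) (Set.Ici x) = 1 - (gaussianReal 0 1) (Set.Iio x) := by
    rw [← Set.compl_Iio, measure_compl measurableSet_Iio (measure_ne_top _ _), measure_univ]
  have h3 : (gaussianReal 0 1) (Set.Iio x) = (gaussianReal 0 1) (Set.Iic x) := by
    refine le_antisymm (measure_mono Set.Iio_subset_Iic_self) ?_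
    have : Set.Iic x ⊆ Set.Iio x ∪ {x} := by
      intro y hy
      rcases (Set.mem_Iic.1 hy).lt_or_eq with h | h
      · exact Or.inl h
      · exact Or.inr h
    calc (gaussianReal 0 1) (Set.Iic x) ≤ (gaussianReal 0 1) (Set.Iio x ∪ {x}) :=
          measure_mono this
      _ ≤ (gaussianReal 0 1) (Set.Iio x) + (gaussianReal 0 1) {x} := measure_union_le _ _
      _ = (gaussianReal 0 1) (Set.Iio x) := by rw [gauss_singleton, add_zero]
  unfold stdNormalCDF
  rw [h1, h2, h3, ENNReal.toReal_sub_of_le prob_le_one ENNReal.one_ne_top, ENNReal.toReal_one]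

/-- the Gaussian copula has zero standardized rank coskewness: for any
centered trivariate Gaussian vector with unit variances `Hᵢ = Σₖ aᵢₖ Zₖ`,
`E[(Φ(H₁)−1/2)(Φ(H₂)−1/2)(Φ(H₃)−1/2)] = 0`, regardless of the correlations. -/
theorem stmt15 {Ω : Type} [MeasurableSpace Ω] (P : Measure Ω) [IsProbabilityMeasure P]
    (Z : Fin 3 → Ω → ℝ)
    (hZmeas : ∀ i, Measurable (Z i))
    (hZindep : iIndepFun Z P)
    (hZdist : ∀ i, P.map (Z i) = gaussianReal 0 1)
    (a : Fin 3 → Fin 3 → ℝ) (hnorm : ∀ i, ∑ k, (a i k)^2 = 1) :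
    ∫ ω, (stdNormalCDF (∑ k, a 0 k * Z k ω) - 1/2)
        * (stdNormalCDF (∑ k, a 1 k * Z k ω) - 1/2)
        * (stdNormalCDF (∑ k, a 2 k * Z k ω) - 1/2) ∂P = 0 := by
  set ν : Measure (Fin 3 → ℝ) := Measure.pi (fun _ => gaussianReal 0 1) with hν
  set g : (Fin 3 → ℝ) → ℝ := fun z =>
    (stdNormalCDF (∑ k, a 0 k * z k) - 1/2) * (stdNormalCDF (∑ k, a 1 k * z k) - 1/2)
      * (stdNormalCDF (∑ k, a 2 k * z k) - 1/2) with hg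
  have hgm : Measurable g := by
    apply Measurable.mul
    apply Measurable.mul
    all_goals
      exact ((stdNormalCDF_measurable.comp (by
        exact Finset.measurable_sum _ fun k _ => (measurable_pi_apply k).const_mul _)).sub
        measurable_const)
  have hjm : Measurable (fun ω => fun i => Z i ω) :=
    measurable_pi_lambda _ fun i => hZmeas i
  have hjoint : P.map (fun ω => fun i => Z i ω) = ν := by
    rw [hν]
    symm
    refine Measure.pi_eq fun s hs => ?_
    rw [Measure.map_apply hjm (MeasurableSet.univ_pi hs)]
    have hpre : (fun ω => fun i => Z i ω) ⁻¹' Set.pi Set.univ s = ⋂ i, Z i ⁻¹' s i := by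
      ext ω; simp [Set.mem_pi]
    rw [hpre]
    have := (iIndepFun_iff_measure_inter_preimage_eq_mul.1 hZindep) Finset.univ
      (sets := s) (fun i _ => hs i)
    simp only [Finset.mem_univ, Set.iInter_true, Set.iInter_coe_set] at this
    rw [this]
    refine Finset.prod_congr rfl fun i _ => ?_
    rw [← hZdist i, Measure.map_apply (hZmeas i) (hs i)]
  have hnegm : Measurable (fun z : Fin 3 → ℝ => fun i => -(z i)) :=
    measurable_pi_lambda _ fun i => (measurable_pi_apply i).neg
  have hnegpi : ν.map (fun z => fun i => -(z i)) = ν := by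
    rw [hν]
    symm
    refine Measure.pi_eq fun s hs => ?_
    rw [Measure.map_apply hnegm (MeasurableSet.univ_pi hs)]
    have hpre : (fun z : Fin 3 → ℝ => fun i => -(z i)) ⁻¹' Set.pi Set.univ s
        = Set.pi Set.univ (fun i => (fun y : ℝ => -y) ⁻¹' s i) := by
      ext z; simp [Set.mem_pi]
    rw [hpre, Measure.pi_pi]
    refine Finset.prod_congr rfl fun i _ => ?_
    conv_rhs => rw [← gauss_map_neg]
    rw [Measure.map_apply measurable_neg (hs i)]
  have key : ∫ z, g z ∂ν = - ∫ z, g z ∂ν := by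
    conv_lhs => rw [← hnegpi]
    rw [integral_map hnegm.aemeasurable hgm.aestronglyMeasurable]
    rw [← integral_neg]
    refine integral_congr_ae (Filter.Eventually.of_forall fun z => ?_)
    have hsum : ∀ i, (∑ k, a i k * (-(z k))) = -(∑ k, a i k * z k) := by
      intro i
      rw [← Finset.sum_neg_distrib]
      exact Finset.sum_congr rfl fun k _ => by ring
    simp only [hg, hsum, stdNormalCDF_neg]
    ring
  have hzero : ∫ z, g z ∂ν = 0 := by linarith
  calc ∫ ω, (stdNormalCDF (∑ k, a 0 k * Z k ω) - 1/2)
        * (stdNormalCDF (∑ k, a 1 k * Z k ω) - 1/2)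
        * (stdNormalCDF (∑ k, a 2 k * Z k ω) - 1/2) ∂P
      = ∫ ω, g (fun i => Z i ω) ∂P := rfl
    _ = ∫ z, g z ∂ν := by
        rw [← hjoint, integral_map hjm.aemeasurable hgm.aestronglyMeasurable]
    _ = 0 := hzero
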